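/- (Hales–Jewett) For all positive integers t and r there exists a number N₀ = HJ(r,t) such that whenever N ≥ N₀ and the set [t]^N of words of length N over the alphabet [t] = {1,2,…,t} is colored with r colors, there exists a monochromatic combinatorial line. -/
import Mathlib

/-- Hales–Jewett theorem: for all `t, r ≥ 1` there is `N₀` such that for every `N ≥ N₀`
and every `r`-coloring of the length-`N` words over a `t`-letter alphabet, there is a
variable word `w` (a word over the alphabet together with `*`, in which `*` occurs)
whose combinatorial line `{w(i) : i ∈ [t]}` is monochromatic. -/
theorem stmt2 (t r : ℕ) (ht : 0 < t) (hr : 0 < r) :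
    ∃ N₀ : ℕ, ∀ N : ℕ, N₀ ≤ N → ∀ χ : (Fin N → Fin t) → Fin r,
      ∃ w : Fin N → Option (Fin t), (∃ j, w j = none) ∧
        ∃ c : Fin r, ∀ i : Fin t, χ (fun j => (w j).getD i) = c := by
  obtain ⟨ι, _inst, hι⟩ := Combinatorics.Line.exists_mono_in_high_dimension (Fin t) (Fin r)
  refine ⟨Fintype.card ι, fun N hN χ => ?_⟩
  set z : Fin t := ⟨0, ht⟩
  let e : Fin (Fintype.card ι) ≃ ι := (Fintype.equivFin ι).symm
  obtain ⟨l, c, hc⟩ := hι (fun x => χ (fun j =>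
    if h : (j : ℕ) < Fintype.card ι then x (e ⟨j, h⟩) else z))
  refine ⟨fun j => if h : (j : ℕ) < Fintype.card ι then l.idxFun (e ⟨j, h⟩) else some z,
    ?_, c, ?_⟩
  · obtain ⟨i, hi⟩ := l.proper
    have hlt : ((e.symm i : Fin (Fintype.card ι)) : ℕ) < N :=
      lt_of_lt_of_le (e.symm i).isLt hN
    refine ⟨⟨e.symm i, hlt⟩, ?_⟩
    simp [(e.symm i).isLt, hi]
  · intro i
    have := hc i
    convert this using 2
    funext j
    by_cases h : (j : ℕ) < Fintype.card ι <;> simp [h, Combinatorics.Line.coe_apply]
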